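/- Fix N ≥ 2, K ≥ 0, positive reals τ_1,…,τ_{N−1}, and define f(F_1,…,F_{N−1}) = Σ_{i=1}^{N−1} τ_i (F_i − K) / P_i, where P_i = ∏_{l=1}^i (1 + τ_l F_l). Then for each j, ∂f/∂F_j = [τ_j / ((1+τ_1F_1)⋯(1+τ_{j−1}F_{j−1})(1+τ_jF_j)^2)] · ( (1+τ_j K) − Σ_{i=j+1}^{N−1} τ_i (F_i − K) / P̃_{ij} ), where P̃_{ij} = (1+τ_{j+1}F_{j+1})⋯(1+τ_i F_i). -/

import Mathlib

private lemma icc_eq_ioc (k : ℕ) : Finset.Icc 1 k = Finset.Ioc 0 k := by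
  ext x; simp [Finset.mem_Icc, Finset.mem_Ioc]; omega

private lemma icc_eq_ioc' (m i : ℕ) : Finset.Icc (m + 1 + 1) i = Finset.Ioc (m + 1) i := by
  ext x; simp [Finset.mem_Icc, Finset.mem_Ioc]

private lemma prod_split (f : ℕ → ℝ) (m i : ℕ) (h : m + 1 ≤ i) :
    ∏ l ∈ Finset.Icc 1 i, f l =
      (∏ l ∈ Finset.Icc 1 m, f l) * f (m + 1) * ∏ l ∈ Finset.Icc (m + 1 + 1) i, f l := by
  rw [icc_eq_ioc, icc_eq_ioc, icc_eq_ioc',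
    ← Finset.prod_Ioc_consecutive f (Nat.zero_le (m + 1)) h,
    Finset.prod_Ioc_succ_top (Nat.zero_le m)]

private lemma sum_split (f : ℕ → ℝ) (m n : ℕ) (h : m + 1 ≤ n) :
    ∑ l ∈ Finset.Icc 1 n, f l =
      (∑ l ∈ Finset.Icc 1 m, f l) + f (m + 1) + ∑ l ∈ Finset.Icc (m + 1 + 1) n, f l := by
  rw [icc_eq_ioc, icc_eq_ioc, icc_eq_ioc',
    ← Finset.sum_Ioc_consecutive f (Nat.zero_le (m + 1)) h,
    Finset.sum_Ioc_succ_top (Nat.zero_le m)]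

/-- Closed form of the partial derivative of the approximated swaption payoff
f(F₁,…,F_{N-1}) = Σ_{i=1}^{N-1} τ_i (F_i - K)/∏_{l=1}^i (1+τ_l F_l)
with respect to F_j. Rates are indexed by 1,…,n with n = N-1 ≥ 1. -/
theorem swaption_payoff_partial_deriv (n : ℕ) (hn : 1 ≤ n)
    (τ : ℕ → ℝ) (K : ℝ) (hτ : ∀ l ∈ Finset.Icc 1 n, 0 < τ l) (hK : 0 ≤ K)
    (F : ℕ → ℝ) (hF : ∀ l ∈ Finset.Icc 1 n, 0 ≤ F l)
    (hpos : ∀ l ∈ Finset.Icc 1 n, 0 < 1 + τ l * F l)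
    (j : ℕ) (hj : j ∈ Finset.Icc 1 n) :
    HasDerivAt
      (fun t : ℝ => ∑ i ∈ Finset.Icc 1 n,
        τ i * (Function.update F j t i - K) /
          ∏ l ∈ Finset.Icc 1 i, (1 + τ l * Function.update F j t l))
      (τ j /
          ((∏ l ∈ Finset.Icc 1 (j - 1), (1 + τ l * F l)) * (1 + τ j * F j) ^ 2) *
        ((1 + τ j * K) -
          ∑ i ∈ Finset.Icc (j + 1) n,
            τ i * (F i - K) / ∏ l ∈ Finset.Icc (j + 1) i, (1 + τ l * F l)))
      (F j) := by
  obtain ⟨hj1, hjn⟩ := Finset.mem_Icc.mp hj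
  obtain ⟨m, rfl⟩ : ∃ m, j = m + 1 := ⟨j - 1, by omega⟩
  simp only [Nat.add_sub_cancel]
  set A : ℝ := ∏ l ∈ Finset.Icc 1 m, (1 + τ l * F l) with hAdef
  have hposj : 0 < 1 + τ (m + 1) * F (m + 1) := hpos _ hj
  have hA : 0 < A := Finset.prod_pos fun l hl => by
    obtain ⟨h1, h2⟩ := Finset.mem_Icc.mp hl
    exact hpos l (Finset.mem_Icc.mpr ⟨h1, by omega⟩)
  set D : ℝ := τ (m + 1) / (A * (1 + τ (m + 1) * F (m + 1)) ^ 2) with hDdef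
  set B : ℕ → ℝ := fun i => ∏ l ∈ Finset.Icc (m + 1 + 1) i, (1 + τ l * F l) with hBdef
  have hB : ∀ i, i ≤ n → 0 < B i := fun i hi => Finset.prod_pos fun l hl => by
    obtain ⟨h1, h2⟩ := Finset.mem_Icc.mp hl
    exact hpos l (Finset.mem_Icc.mpr ⟨by omega, by omega⟩)
  set d : ℕ → ℝ := fun i =>
    if i < m + 1 then 0
    else if i = m + 1 then D * (1 + τ (m + 1) * K)
    else -(D * (τ i * (F i - K) / B i)) with hd
  have hprod : ∀ i, m + 1 ≤ i → ∀ t : ℝ,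
      (∏ l ∈ Finset.Icc 1 i, (1 + τ l * Function.update F (m + 1) t l)) =
        A * (1 + τ (m + 1) * t) * B i := by
    intro i hi t
    rw [prod_split _ m i hi, Function.update_self]
    congr 1
    · congr 1
      refine Finset.prod_congr rfl fun l hl => ?_
      obtain ⟨h1, h2⟩ := Finset.mem_Icc.mp hl
      rw [Function.update_of_ne (by omega)]
    · refine Finset.prod_congr rfl fun l hl => ?_
      obtain ⟨h1, h2⟩ := Finset.mem_Icc.mp hl
      rw [Function.update_of_ne (by omega)]
  have key : HasDerivAt
      (fun t : ℝ => ∑ i ∈ Finset.Icc 1 n,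
        τ i * (Function.update F (m + 1) t i - K) /
          ∏ l ∈ Finset.Icc 1 i, (1 + τ l * Function.update F (m + 1) t l))
      (∑ i ∈ Finset.Icc 1 n, d i) (F (m + 1)) := by
    apply HasDerivAt.fun_sum
    intro i hi
    obtain ⟨hi1, hin⟩ := Finset.mem_Icc.mp hi
    rcases lt_trichotomy i (m + 1) with hcase | hcase | hcase
    · -- constant term
      have heq : (fun t : ℝ => τ i * (Function.update F (m + 1) t i - K) /
          ∏ l ∈ Finset.Icc 1 i, (1 + τ l * Function.update F (m + 1) t l)) =
          fun _ => τ i * (F i - K) / ∏ l ∈ Finset.Icc 1 i, (1 + τ l * F l) := by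
        funext t
        rw [Function.update_of_ne (by omega)]
        congr 1
        refine Finset.prod_congr rfl fun l hl => ?_
        obtain ⟨h1, h2⟩ := Finset.mem_Icc.mp hl
        rw [Function.update_of_ne (by omega)]
      rw [heq, hd]
      simp only [if_pos hcase]
      exact hasDerivAt_const _ _
    · -- i = m + 1
      subst hcase
      have heq : (fun t : ℝ => τ (m + 1) * (Function.update F (m + 1) t (m + 1) - K) /
          ∏ l ∈ Finset.Icc 1 (m + 1), (1 + τ l * Function.update F (m + 1) t l)) =
          fun t : ℝ => (τ (m + 1) * (t - K)) / (A * (1 + τ (m + 1) * t) * B (m + 1)) := by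
        funext t
        rw [hprod _ le_rfl t, Function.update_self]
      rw [heq, hd]
      simp only [lt_irrefl, if_neg (lt_irrefl _), if_pos rfl, ↓reduceIte]
      have hBe : B (m + 1) = 1 := by
        rw [hBdef]
        simp [Finset.Icc_eq_empty_of_lt (by omega : m + 1 < m + 1 + 1)]
      have hnum : HasDerivAt (fun t : ℝ => τ (m + 1) * (t - K)) (τ (m + 1)) (F (m + 1)) := by
        simpa using ((hasDerivAt_id (F (m + 1))).sub_const K).const_mul (τ (m + 1))
      have hden : HasDerivAt (fun t : ℝ => A * (1 + τ (m + 1) * t) * B (m + 1))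
          (A * τ (m + 1) * B (m + 1)) (F (m + 1)) := by
        simpa using ((((hasDerivAt_id (F (m + 1))).const_mul (τ (m + 1))).const_add
          1).const_mul A).mul_const (B (m + 1))
      have hden_ne : A * (1 + τ (m + 1) * F (m + 1)) * B (m + 1) ≠ 0 := by
        rw [hBe]; positivity
      have := hnum.div hden hden_ne
      refine this.congr_deriv ?_
      rw [hBe, hDdef]
      field_simp
      ring
    · -- i > m + 1
      have heq : (fun t : ℝ => τ i * (Function.update F (m + 1) t i - K) /
          ∏ l ∈ Finset.Icc 1 i, (1 + τ l * Function.update F (m + 1) t l)) =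
          fun t : ℝ => (τ i * (F i - K)) / (A * (1 + τ (m + 1) * t) * B i) := by
        funext t
        rw [hprod _ (by omega) t, Function.update_of_ne (by omega)]
      rw [heq, hd]
      simp only [if_neg (by omega : ¬ i < m + 1), if_neg (by omega : ¬ i = m + 1)]
      have hBi : 0 < B i := hB i hin
      have hnum : HasDerivAt (fun _ : ℝ => τ i * (F i - K)) 0 (F (m + 1)) :=
        hasDerivAt_const _ _
      have hden : HasDerivAt (fun t : ℝ => A * (1 + τ (m + 1) * t) * B i)
          (A * τ (m + 1) * B i) (F (m + 1)) := by
        simpa using ((((hasDerivAt_id (F (m + 1))).const_mul (τ (m + 1))).const_add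
          1).const_mul A).mul_const (B i)
      have hden_ne : A * (1 + τ (m + 1) * F (m + 1)) * B i ≠ 0 := by positivity
      have := hnum.div hden hden_ne
      refine this.congr_deriv ?_
      rw [hDdef]
      field_simp
      ring
  have hsum : (∑ i ∈ Finset.Icc 1 n, d i) =
      D * ((1 + τ (m + 1) * K) -
        ∑ i ∈ Finset.Icc (m + 1 + 1) n, τ i * (F i - K) / B i) := by
    rw [sum_split d m n hjn]
    have h1 : (∑ l ∈ Finset.Icc 1 m, d l) = 0 := by
      refine Finset.sum_eq_zero fun l hl => ?_
      obtain ⟨ha, hb⟩ := Finset.mem_Icc.mp hl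
      rw [hd]; simp only [if_pos (by omega : l < m + 1)]
    have h2 : d (m + 1) = D * (1 + τ (m + 1) * K) := by
      rw [hd]; simp
    have h3 : (∑ i ∈ Finset.Icc (m + 1 + 1) n, d i) =
        -(D * ∑ i ∈ Finset.Icc (m + 1 + 1) n, τ i * (F i - K) / B i) := by
      rw [Finset.mul_sum, ← Finset.sum_neg_distrib]
      refine Finset.sum_congr rfl fun i hi => ?_
      obtain ⟨ha, hb⟩ := Finset.mem_Icc.mp hi
      rw [hd]; simp only [if_neg (by omega : ¬ i < m + 1), if_neg (by omega : ¬ i = m + 1)]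
    rw [h1, h2, h3]; ring
  rw [hsum] at key
  exact key
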